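/- For logically independent events A, H, B, K (H ≠ ∅, K ≠ ∅), the set of coherent extensions z = P[(A|H) ∧_K (B|K)] of a coherent assessment (x,y) on {A|H, B|K} is exactly the interval [0, min{x,y}]. Consequently the Fréchet–Hoeffding lower bound max{x+y−1, 0} is not attained as the lower coherence bound for ∧_K: for (x,y)=(1,1), z = 0 is coherent. -/

import Mathlib

lemma mem_hull_of_comb {E : Type*} [AddCommGroup E] [Module ℝ E] {s : Set E}
    {n : ℕ} (f : Fin n → E) (w : Fin n → ℝ) (hf : ∀ i, f i ∈ s)
    (hw : ∀ i, 0 ≤ w i) (hsum : 0 < ∑ i, w i) :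
    (∑ i, w i)⁻¹ • ∑ i, w i • f i ∈ convexHull ℝ s := by
  have := Finset.centerMass_mem_convexHull (Finset.univ)
    (fun i _ => hw i) (by simpa using hsum) (fun i _ => hf i)
  simpa [Finset.centerMass] using this

lemma coherent_of {x y z : ℝ} (hx1 : x ≤ 1) (hy1 : y ≤ 1)
    (hz0 : 0 ≤ z) (hzx : z ≤ x) (hzy : z ≤ y) :
    x ∈ Set.Icc (0:ℝ) 1 ∧ y ∈ Set.Icc (0:ℝ) 1 ∧ z ∈ Set.Icc (0:ℝ) 1 ∧
    (x, y) ∈ convexHull ℝ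
      ({((1:ℝ), (1:ℝ)), (1, 0), (1, y), (0, 1), (0, 0), (0, y),
        (x, 1), (x, 0)} : Set (ℝ × ℝ)) ∧
    (x, z) ∈ convexHull ℝ
      ({((1:ℝ), (1:ℝ)), (1, 0), (1, z), (0, 0), (x, 0)} : Set (ℝ × ℝ)) ∧
    (y, z) ∈ convexHull ℝ
      ({((1:ℝ), (1:ℝ)), (1, 0), (1, z), (0, 0), (y, 0)} : Set (ℝ × ℝ)) ∧
    (x, y, z) ∈ convexHull ℝ
      ({((1:ℝ), (1:ℝ), (1:ℝ)), (1, 0, 0), (1, y, z), (0, 1, 0), (0, 0, 0),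
        (0, y, 0), (x, 1, z), (x, 0, 0)} : Set (ℝ × ℝ × ℝ)) := by
  have hx0 : 0 ≤ x := le_trans hz0 hzx
  have hy0 : 0 ≤ y := le_trans hz0 hzy
  have hz1 : z ≤ 1 := le_trans hzx hx1
  refine ⟨⟨hx0, hx1⟩, ⟨hy0, hy1⟩, ⟨hz0, hz1⟩, ?_, ?_, ?_, ?_⟩
  · have h := mem_hull_of_comb (s := ({((1:ℝ), (1:ℝ)), (1, 0), (1, y), (0, 1), (0, 0), (0, y),
        (x, 1), (x, 0)} : Set (ℝ × ℝ)))
      ![((1:ℝ), y), (0, y)] ![x, 1 - x]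
      (by intro i; fin_cases i <;> simp)
      (by intro i; fin_cases i <;> simp <;> linarith)
      (by simp [Fin.sum_univ_two])
    have e : ((∑ i, (![x, 1-x]) i)⁻¹ • ∑ i, (![x, 1-x]) i • (![((1:ℝ), y), (0, y)]) i) = (x, y) := by
      simp [Fin.sum_univ_two, Prod.ext_iff]
      all_goals try constructor
      all_goals try constructor
      all_goals ring
    rwa [e] at h
  · have h := mem_hull_of_comb (s := ({((1:ℝ), (1:ℝ)), (1, 0), (1, z), (0, 0), (x, 0)} : Set (ℝ × ℝ)))
      ![((1:ℝ), (1:ℝ)), (1, 0), (0, 0)] ![z, x - z, 1 - x]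
      (by intro i; fin_cases i <;> simp)
      (by intro i; fin_cases i <;> simp <;> linarith)
      (by simp [Fin.sum_univ_three])
    have e : ((∑ i, (![z, x-z, 1-x]) i)⁻¹ • ∑ i, (![z, x-z, 1-x]) i • (![((1:ℝ), (1:ℝ)), (1, 0), (0, 0)]) i) = (x, z) := by
      simp [Fin.sum_univ_three, Prod.ext_iff]
      all_goals try constructor
      all_goals try constructor
      all_goals ring
    rwa [e] at h
  · have h := mem_hull_of_comb (s := ({((1:ℝ), (1:ℝ)), (1, 0), (1, z), (0, 0), (y, 0)} : Set (ℝ × ℝ)))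
      ![((1:ℝ), (1:ℝ)), (1, 0), (0, 0)] ![z, y - z, 1 - y]
      (by intro i; fin_cases i <;> simp)
      (by intro i; fin_cases i <;> simp <;> linarith)
      (by simp [Fin.sum_univ_three])
    have e : ((∑ i, (![z, y-z, 1-y]) i)⁻¹ • ∑ i, (![z, y-z, 1-y]) i • (![((1:ℝ), (1:ℝ)), (1, 0), (0, 0)]) i) = (y, z) := by
      simp [Fin.sum_univ_three, Prod.ext_iff]
      all_goals try constructor
      all_goals try constructor
      all_goals ring
    rwa [e] at h
  · by_cases hxy : x = 1 ∧ y = 1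
    · obtain ⟨rfl, rfl⟩ := hxy
      exact subset_convexHull ℝ _ (by simp)
    · have hN : 0 < 1 - x*y - 2*z + z*x + z*y := by
        rcases not_and_or.mp hxy with h1 | h1
        · have : x < 1 := lt_of_le_of_ne hx1 h1
          nlinarith [mul_nonneg (sub_nonneg.mpr hzy) (sub_nonneg.mpr hzx)]
        · have : y < 1 := lt_of_le_of_ne hy1 h1
          nlinarith [mul_nonneg (sub_nonneg.mpr hzy) (sub_nonneg.mpr hzx)]
      have hN' : (1 - x*y - 2*z + z*x + z*y) ≠ 0 := ne_of_gt hN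
      have hS : (∑ i, (![(x - z)*(1 - y), (y - z)*(1 - x), z*(1 - x)*(1 - y), (1 - z)*(1 - x)*(1 - y)]) i)
          = 1 - x*y - 2*z + z*x + z*y := by
        simp [Fin.sum_univ_four]
        ring
      have h := mem_hull_of_comb
        (s := ({((1:ℝ), (1:ℝ), (1:ℝ)), (1, 0, 0), (1, y, z), (0, 1, 0), (0, 0, 0),
          (0, y, 0), (x, 1, z), (x, 0, 0)} : Set (ℝ × ℝ × ℝ)))
        ![((1:ℝ), y, z), (x, 1, z), (1, 1, 1), (0, 0, 0)]
        ![(x - z)*(1 - y), (y - z)*(1 - x), z*(1 - x)*(1 - y), (1 - z)*(1 - x)*(1 - y)]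
        (by intro i; fin_cases i <;> simp)
        (by intro i; fin_cases i <;> simp <;>
          first
            | nlinarith
            | exact mul_nonneg (mul_nonneg (by linarith) (by linarith)) (by linarith))
        (by rw [hS]; exact hN)
      rw [hS] at h
      have e : ((1 - x*y - 2*z + z*x + z*y)⁻¹ •
          ∑ i, (![(x - z)*(1 - y), (y - z)*(1 - x), z*(1 - x)*(1 - y), (1 - z)*(1 - x)*(1 - y)]) i •
            (![((1:ℝ), y, z), (x, 1, z), (1, 1, 1), ((0:ℝ), (0:ℝ), (0:ℝ))]) i) = (x, y, z) := by
        simp [Fin.sum_univ_four, Prod.ext_iff]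
        all_goals try constructor
        all_goals try constructor
        all_goals (rw [inv_mul_eq_iff_eq_mul₀ hN']; ring)
      rwa [e] at h

lemma le_of_hull {a b : ℝ} {s : Set (ℝ × ℝ)} (hs : ∀ p ∈ s, p.2 ≤ p.1)
    (h : (a, b) ∈ convexHull ℝ s) : b ≤ a := by
  have hlin : IsLinearMap ℝ (fun p : ℝ × ℝ => p.2 - p.1) := by
    constructor
    · intro p q; simp [Prod.snd_add, Prod.fst_add]; ring
    · intro c p; simp [Prod.smul_snd, Prod.smul_fst, smul_eq_mul]; ring
  have hc : Convex ℝ {p : ℝ × ℝ | p.2 - p.1 ≤ 0} := convex_halfSpace_le hlin 0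
  have := convexHull_min (fun p hp => by simpa [sub_nonpos] using hs p hp) hc h
  simpa [sub_nonpos] using this



/-- Coherence of the assessment `(x, y, z)` on `{A|H, B|K, (A|H) ∧_K (B|K)}`
for logically independent events `A, H, B, K` (all constituents are possible),
where `(A|H) ∧_K (B|K) = AHBK | (AHBK ∨ ¬AH ∨ ¬BK)`.  It is expressed
geometrically: every sub-assessment must lie in the convex hull of the points
associated with the constituents of the corresponding subfamily (singletons
give the conditions `x, y, z ∈ [0,1]`). -/
def CoherentK (x y z : ℝ) : Prop :=
  x ∈ Set.Icc (0:ℝ) 1 ∧ y ∈ Set.Icc (0:ℝ) 1 ∧ z ∈ Set.Icc (0:ℝ) 1 ∧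
  (x, y) ∈ convexHull ℝ
    ({((1:ℝ), (1:ℝ)), (1, 0), (1, y), (0, 1), (0, 0), (0, y),
      (x, 1), (x, 0)} : Set (ℝ × ℝ)) ∧
  (x, z) ∈ convexHull ℝ
    ({((1:ℝ), (1:ℝ)), (1, 0), (1, z), (0, 0), (x, 0)} : Set (ℝ × ℝ)) ∧
  (y, z) ∈ convexHull ℝ
    ({((1:ℝ), (1:ℝ)), (1, 0), (1, z), (0, 0), (y, 0)} : Set (ℝ × ℝ)) ∧
  (x, y, z) ∈ convexHull ℝ
    ({((1:ℝ), (1:ℝ), (1:ℝ)), (1, 0, 0), (1, y, z), (0, 1, 0), (0, 0, 0),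
      (0, y, 0), (x, 1, z), (x, 0, 0)} : Set (ℝ × ℝ × ℝ))

/-- For logically independent events, the coherent extensions
`z = P[(A|H) ∧_K (B|K)]` of a coherent assessment `(x, y)` on `{A|H, B|K}`
are exactly the interval `[0, min{x, y}]`.  Consequently the
Fréchet–Hoeffding lower bound `max{x+y−1, 0}` is not the lower coherence
bound for `∧_K`: for `(x, y) = (1, 1)` the value `z = 0` is coherent. -/
theorem conjK_extension_interval (x y : ℝ)
    (hx : x ∈ Set.Icc (0:ℝ) 1) (hy : y ∈ Set.Icc (0:ℝ) 1) :
    {z : ℝ | CoherentK x y z} = Set.Icc 0 (min x y) ∧ CoherentK 1 1 0 := by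
  constructor
  · ext z
    simp only [Set.mem_setOf_eq, Set.mem_Icc, le_min_iff]
    constructor
    · rintro ⟨hxI, hyI, hzI, -, h5, h6, -⟩
      obtain ⟨hz0, hz1⟩ := hzI
      obtain ⟨hx0, hx1⟩ := hx
      obtain ⟨hy0, hy1⟩ := hy
      refine ⟨hz0, ?_, ?_⟩
      · refine le_of_hull ?_ h5
        intro p hp
        simp only [Set.mem_insert_iff, Set.mem_singleton_iff] at hp
        rcases hp with rfl | rfl | rfl | rfl | rfl <;> simp <;> linarith
      · refine le_of_hull ?_ h6
        intro p hp
        simp only [Set.mem_insert_iff, Set.mem_singleton_iff] at hp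
        rcases hp with rfl | rfl | rfl | rfl | rfl <;> simp <;> linarith
    · rintro ⟨hz0, hzx, hzy⟩
      exact coherent_of hx.2 hy.2 hz0 hzx hzy
  · exact coherent_of le_rfl le_rfl le_rfl zero_le_one zero_le_one
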